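/- Let W be a C^2 solution on [r_1, ∞) ⊂ (1, ∞) of (1 - 1/r) W'' + (1/r^2) W' + (1/r^2) W(1 - W^2) = 0 with |W| ≤ 1, and suppose W(r) → l as r → ∞. Then l ∈ {-1, 0, 1}. -/

import Mathlib

open Real Set Filter

private lemma key_lemma
    (W : ℝ → ℝ) (r1 l : ℝ) (hr1 : 1 < r1)
    (hreg : ContDiffOn ℝ 2 W (Ici r1))
    (hode : ∀ r ∈ Ici r1,
      (1 - 1 / r) * deriv (deriv W) r + (1 / r ^ 2) * deriv W r
        + (1 / r ^ 2) * W r * (1 - (W r) ^ 2) = 0)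
    (hbd : ∀ r ∈ Ici r1, |W r| ≤ 1)
    (hlim : Tendsto W atTop (nhds l))
    (hc : 0 < l * (1 - l ^ 2)) : False := by
  set c : ℝ := l * (1 - l ^ 2) with hcdef
  -- regularity on the open set
  have hsub : Ioi r1 ⊆ Ici r1 := Ioi_subset_Ici_self
  have hregO : ContDiffOn ℝ 2 W (Ioi r1) := hreg.mono hsub
  have hd1 : DifferentiableOn ℝ W (Ioi r1) := hregO.differentiableOn (by norm_num)
  have hder : ContDiffOn ℝ 1 (deriv W) (Ioi r1) :=
    hregO.deriv_of_isOpen isOpen_Ioi (by norm_num)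
  have hd2 : DifferentiableOn ℝ (deriv W) (Ioi r1) := hder.differentiableOn (by norm_num)
  have hW1 : ∀ r ∈ Ioi r1, HasDerivAt W (deriv W r) r := fun r hr =>
    (hd1.differentiableAt (isOpen_Ioi.mem_nhds hr)).hasDerivAt
  have hW2 : ∀ r ∈ Ioi r1, HasDerivAt (deriv W) (deriv (deriv W) r) r := fun r hr =>
    (hd2.differentiableAt (isOpen_Ioi.mem_nhds hr)).hasDerivAt
  -- the auxiliary function p
  set p : ℝ → ℝ := fun r => (1 - 1 / r) * deriv W r with hpdef
  have hp : ∀ r ∈ Ioi r1, HasDerivAt p (-(W r * (1 - (W r) ^ 2)) / r ^ 2) r := by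
    intro r hr
    have hr1' : (1 : ℝ) < r := lt_trans hr1 hr
    have hr0 : r ≠ 0 := by positivity
    have h1 : HasDerivAt (fun s : ℝ => 1 - 1 / s) (1 / r ^ 2) r := by
      have := (hasDerivAt_inv hr0).const_sub 1
      simpa [one_div, neg_neg] using this
    have h2 : HasDerivAt p _ r := (h1.mul (hW2 r hr))
    have hodeR := hode r (hsub hr)
    convert h2 using 1
    have hr2 : r ^ 2 ≠ 0 := pow_ne_zero 2 hr0
    field_simp at hodeR ⊢
    nlinarith [hodeR]
  -- eventual positivity of the nonlinearity
  have htend : Tendsto (fun r => W r * (1 - (W r) ^ 2)) atTop (nhds c) :=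
    hlim.mul (tendsto_const_nhds.sub (hlim.pow 2))
  have hev : ∀ᶠ r in atTop, c / 2 < W r * (1 - (W r) ^ 2) :=
    htend.eventually (eventually_gt_nhds (by linarith))
  obtain ⟨R0, hR0⟩ := hev.exists_forall_of_atTop
  set R : ℝ := max (r1 + 1) R0 with hRdef
  have hRr1 : r1 < R := lt_of_lt_of_le (by linarith) (le_max_left _ _)
  have hR1 : (1 : ℝ) < R := lt_trans hr1 hRr1
  have hRsub : Ici R ⊆ Ioi r1 := fun x hx => lt_of_lt_of_le hRr1 hx
  have hnl : ∀ r ∈ Ici R, c / 2 < W r * (1 - (W r) ^ 2) := fun r hr =>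
    hR0 r (le_trans (le_max_right _ _) hr)
  have hxpos : ∀ x ∈ Ici R, (1 : ℝ) < x := fun x hx => lt_of_lt_of_le hR1 hx
  -- p is antitone on Ici R
  have hpcontOn : ∀ S : ℝ, R ≤ S → ContinuousOn p (Ici S) := by
    intro S hS
    have hsub' : Ici S ⊆ Ioi r1 := fun x hx => hRsub (le_trans hS hx : x ∈ Ici R)
    apply ContinuousOn.mul
    · exact continuousOn_const.sub (continuousOn_const.div continuousOn_id
        (fun x hx => by
          have := hxpos x (le_trans hS hx); exact ne_of_gt (by linarith)))
    · exact (hd2.continuousOn).mono hsub'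
  have hpdiffOn : ∀ S : ℝ, R ≤ S → DifferentiableOn ℝ p (interior (Ici S)) := by
    intro S hS x hx
    rw [interior_Ici] at hx
    have hx' : x ∈ Ioi r1 := hRsub (le_of_lt (lt_of_le_of_lt hS hx))
    exact ((hp x hx').differentiableAt).differentiableWithinAt
  have hpderiv : ∀ x ∈ Ici R, deriv p x = -(W x * (1 - (W x) ^ 2)) / x ^ 2 :=
    fun x hx => (hp x (hRsub hx)).deriv
  have hpant : AntitoneOn p (Ici R) := by
    apply antitoneOn_of_deriv_nonpos (convex_Ici R) (hpcontOn R le_rfl) (hpdiffOn R le_rfl)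
    intro x hx
    rw [interior_Ici] at hx
    rw [hpderiv x (Ioi_subset_Ici_self hx)]
    have h1 := hnl x (Ioi_subset_Ici_self hx)
    have h2 : (0:ℝ) < x ^ 2 := by have := hxpos x (Ioi_subset_Ici_self hx); positivity
    have : 0 < W x * (1 - (W x) ^ 2) := lt_trans (by linarith) h1
    exact div_nonpos_of_nonpos_of_nonneg (by linarith) (le_of_lt h2)
  by_cases hcase : ∀ r ∈ Ici R, 0 ≤ p r
  · -- case p ≥ 0 everywhere: p r ≥ c/(2r), so W grows like log
    -- g := p - c/2 * (1/r) is antitone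
    set g : ℝ → ℝ := fun r => p r - c / 2 * (1 / r) with hgdef
    have hg : ∀ r ∈ Ici R, HasDerivAt g
        (-(W r * (1 - (W r) ^ 2)) / r ^ 2 + c / 2 * (1 / r ^ 2)) r := by
      intro r hr
      have hr0 : r ≠ 0 := ne_of_gt (by linarith [hxpos r hr])
      have h1 : HasDerivAt (fun s : ℝ => c / 2 * (1 / s)) (c / 2 * (-(1 / r ^ 2))) r := by
        have := (hasDerivAt_inv hr0).const_mul (c / 2)
        simpa [one_div] using this
      have h2 : HasDerivAt g _ r := (hp r (hRsub hr)).sub h1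
      convert h2 using 1
      ring
    have hgant : AntitoneOn g (Ici R) := by
      apply antitoneOn_of_deriv_nonpos (convex_Ici R)
      · exact (hpcontOn R le_rfl).sub (continuousOn_const.mul
          (continuousOn_const.div continuousOn_id
            (fun x hx => ne_of_gt (by linarith [hxpos x hx]))))
      · intro x hx
        rw [interior_Ici] at hx
        exact ((hg x (Ioi_subset_Ici_self hx)).differentiableAt).differentiableWithinAt
      · intro x hx
        rw [interior_Ici] at hx
        rw [(hg x (Ioi_subset_Ici_self hx)).deriv]
        have h1 := hnl x (Ioi_subset_Ici_self hx)
        have h2 : (0:ℝ) < x ^ 2 := by have := hxpos x (Ioi_subset_Ici_self hx); positivity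
        have heq : -(W x * (1 - (W x) ^ 2)) / x ^ 2 + c / 2 * (1 / x ^ 2)
            = (c / 2 - W x * (1 - (W x) ^ 2)) / x ^ 2 := by ring
        rw [heq]
        exact div_nonpos_of_nonpos_of_nonneg (by linarith) (le_of_lt h2)
    -- lower bound p r ≥ c/2 * (1/r)
    have hplb : ∀ r ∈ Ici R, c / 2 * (1 / r) ≤ p r := by
      intro r hr
      have hglb : ∀ᶠ T in atTop, -(c / 2) * (1 / T) ≤ g r := by
        filter_upwards [eventually_ge_atTop r] with T hT
        have hTR : T ∈ Ici R := le_trans hr hT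
        have h1 : g T ≤ g r := hgant hr hTR hT
        have h2 : 0 ≤ p T := hcase T hTR
        have : g T = p T - c / 2 * (1 / T) := rfl
        rw [this] at h1
        linarith
      have htend0 : Tendsto (fun T : ℝ => -(c / 2) * (1 / T)) atTop (nhds 0) := by
        have := tendsto_inv_atTop_zero.const_mul (-(c / 2))
        simpa [one_div] using this
      have h0 : (0 : ℝ) ≤ g r := le_of_tendsto htend0 hglb
      have : g r = p r - c / 2 * (1 / r) := rfl
      rw [this] at h0
      linarith
    -- lower bound on deriv W
    have hW'lb : ∀ r ∈ Ici R, c / 2 * (1 / r) ≤ deriv W r := by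
      intro r hr
      have hr1' : (1 : ℝ) < r := hxpos r hr
      have hir : 0 < 1 / r := by positivity
      have hir1 : 1 / r < 1 := by
        rw [div_lt_one (by linarith)]; linarith
      have hpa : c / 2 * (1 / r) ≤ (1 - 1 / r) * deriv W r := hplb r hr
      have hW0 : 0 < deriv W r := by nlinarith [mul_pos (half_pos hc) hir]
      have : (1 - 1 / r) * deriv W r ≤ deriv W r :=
        mul_le_of_le_one_left (le_of_lt hW0) (by linarith)
      linarith
    -- W - (c/2) log is monotone, so W is unbounded
    have hmono : MonotoneOn (fun r => W r - c / 2 * Real.log r) (Ici R) := by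
      apply monotoneOn_of_deriv_nonneg (convex_Ici R)
      · apply ContinuousOn.sub
        · exact hreg.continuousOn.mono (fun x hx => Ioi_subset_Ici_self (hRsub hx))
        · exact continuousOn_const.mul (Real.continuousOn_log.mono
            (fun x hx => ne_of_gt (by linarith [hxpos x hx])))
      · intro x hx
        rw [interior_Ici] at hx
        have hx0 : x ≠ 0 := ne_of_gt (by linarith [hxpos x (Ioi_subset_Ici_self hx)])
        exact (((hW1 x (hRsub (Ioi_subset_Ici_self hx))).sub
          ((Real.hasDerivAt_log hx0).const_mul (c / 2))).differentiableAt).differentiableWithinAt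
      · intro x hx
        rw [interior_Ici] at hx
        have hx0 : x ≠ 0 := ne_of_gt (by linarith [hxpos x (Ioi_subset_Ici_self hx)])
        rw [show deriv (fun r => W r - c / 2 * Real.log r) x = _ from ((hW1 x (hRsub (Ioi_subset_Ici_self hx))).sub
          ((Real.hasDerivAt_log hx0).const_mul (c / 2))).deriv]
        have := hW'lb x (Ioi_subset_Ici_self hx)
        rw [one_div] at this
        linarith
    set r' : ℝ := R * Real.exp (6 / c) with hr'def
    have hRpos : (0 : ℝ) < R := by linarith
    have hr'ge : R ≤ r' := le_mul_of_one_le_right (le_of_lt hRpos)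
      (Real.one_le_exp (by positivity))
    have hlog : Real.log r' = Real.log R + 6 / c := by
      rw [hr'def, Real.log_mul (ne_of_gt hRpos) (Real.exp_ne_zero _), Real.log_exp]
    have hmr := hmono (self_mem_Ici) (show r' ∈ Ici R from hr'ge) hr'ge
    simp only [hlog] at hmr
    have hc6 : c / 2 * (6 / c) = 3 := by
      field_simp
      ring
    have hb1 := abs_le.mp (hbd R (le_of_lt hRr1))
    have hb2 := abs_le.mp (hbd r' (le_trans (le_of_lt hRr1) hr'ge))
    nlinarith [hmr, hb1.1, hb2.2]
  · -- case: p takes a negative value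
    push_neg at hcase
    obtain ⟨r0, hr0R, hpr0⟩ := hcase
    set d : ℝ := -p r0 with hddef
    have hd : 0 < d := by simp [hddef]; linarith
    have hr0sub : Ici r0 ⊆ Ici R := fun x hx => mem_Ici.mpr (le_trans (mem_Ici.mp hr0R) (mem_Ici.mp hx))
    -- deriv W ≤ -d on Ici r0
    have hW'ub : ∀ r ∈ Ici r0, deriv W r ≤ -d := by
      intro r hr
      have hrR : r ∈ Ici R := hr0sub hr
      have hple : p r ≤ p r0 := hpant hr0R hrR hr
      have hr1' : (1 : ℝ) < r := hxpos r hrR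
      have hir : 0 < 1 / r := by positivity
      have hir1 : 1 / r < 1 := by rw [div_lt_one (by linarith)]; linarith
      have hpa : (1 - 1 / r) * deriv W r ≤ -d := by
        have : p r = (1 - 1 / r) * deriv W r := rfl
        linarith [hple.trans_eq (show p r0 = -d by simp [hddef])]
      have hW0 : deriv W r < 0 := by nlinarith
      nlinarith
    have hanti : AntitoneOn (fun r => W r + d * r) (Ici r0) := by
      apply antitoneOn_of_deriv_nonpos (convex_Ici r0)
      · exact (hreg.continuousOn.mono
          (fun x hx => Ioi_subset_Ici_self (hRsub (hr0sub hx)))).add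
          (continuousOn_const.mul continuousOn_id)
      · intro x hx
        rw [interior_Ici] at hx
        have hlin : HasDerivAt (fun r : ℝ => d * r) d x := by
          simpa using (hasDerivAt_id x).const_mul d
        exact (((hW1 x (hRsub (hr0sub (Ioi_subset_Ici_self hx)))).add hlin
          ).differentiableAt).differentiableWithinAt
      · intro x hx
        rw [interior_Ici] at hx
        have hlin : HasDerivAt (fun r : ℝ => d * r) d x := by
          simpa using (hasDerivAt_id x).const_mul d
        rw [show deriv (fun r => W r + d * r) x = _ from ((hW1 x (hRsub (hr0sub (Ioi_subset_Ici_self hx)))).add hlin).deriv]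
        have := hW'ub x (Ioi_subset_Ici_self hx)
        linarith
    have hr'ge : r0 ≤ r0 + 3 / d := by
      have : 0 < 3 / d := by positivity
      linarith
    have hk := hanti (self_mem_Ici) (show r0 + 3 / d ∈ Ici r0 from hr'ge) hr'ge
    simp only at hk
    have hd3 : d * (r0 + 3 / d) = d * r0 + 3 := by
      rw [mul_add, mul_div_cancel₀ _ (ne_of_gt hd)]
    have hb1 := abs_le.mp (hbd r0 (Ioi_subset_Ici_self (hRsub hr0R)))
    have hb2 := abs_le.mp (hbd (r0 + 3 / d) (Ioi_subset_Ici_self (hRsub (hr0sub hr'ge))))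
    nlinarith [hk, hd3, hb1.2, hb2.1]

theorem limit_classification
    (W : ℝ → ℝ) (r1 l : ℝ) (hr1 : 1 < r1)
    (hreg : ContDiffOn ℝ 2 W (Ici r1))
    (hode : ∀ r ∈ Ici r1,
      (1 - 1 / r) * deriv (deriv W) r + (1 / r ^ 2) * deriv W r
        + (1 / r ^ 2) * W r * (1 - (W r) ^ 2) = 0)
    (hbd : ∀ r ∈ Ici r1, |W r| ≤ 1)
    (hlim : Tendsto W atTop (nhds l)) :
    l = -1 ∨ l = 0 ∨ l = 1 := by
  rcases lt_trichotomy (l * (1 - l ^ 2)) 0 with hlt | heq | hgt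
  · -- apply the key lemma to -W
    exfalso
    have hdV : deriv (fun r => -W r) = fun x => -deriv W x := funext fun x => deriv.neg
    apply key_lemma (fun r => -W r) r1 (-l) hr1 hreg.neg ?_ ?_ hlim.neg ?_
    · intro r hr
      have h1 : deriv (deriv fun r => -W r) r = -deriv (deriv W) r := by
        rw [hdV]; exact deriv.neg
      rw [h1, hdV]
      have := hode r hr
      ring_nf
      ring_nf at this
      linarith
    · intro r hr
      rw [abs_neg]
      exact hbd r hr
    · nlinarith
  · -- l (1 - l²) = 0
    rcases mul_eq_zero.mp heq with h | h
    · exact Or.inr (Or.inl h)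
    · have h2 : (l - 1) * (l + 1) = 0 := by nlinarith
      rcases mul_eq_zero.mp h2 with h3 | h3
      · exact Or.inr (Or.inr (by linarith))
      · exact Or.inl (by linarith)
  · exact absurd (key_lemma W r1 l hr1 hreg hode hbd hlim hgt) (fun h => h)
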